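/- Let n ≥ 1 and let F and G be facets of Δ(n) such that F precedes G in the order O. Then there exists a vertex v ∈ G \ F satisfying the B-condition in G. -/

import Mathlib

/-- Vertices of `Δ(n)`: integer triples. -/
abbrev V : Type := ℕ × ℕ × ℕ

/-- The strict componentwise order on triples. -/
def slt (u v : V) : Prop := u.1 < v.1 ∧ u.2.1 < v.2.1 ∧ u.2.2 < v.2.2

/-- A face of `Δ(n)`: a finite subset of `{1,…,n}³` that is a chain under `slt`. -/
def IsFace (n : ℕ) (F : Finset V) : Prop :=
  (∀ v ∈ F, v.1 ∈ Finset.Icc 1 n ∧ v.2.1 ∈ Finset.Icc 1 n ∧ v.2.2 ∈ Finset.Icc 1 n) ∧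
  (∀ u ∈ F, ∀ v ∈ F, u ≠ v → slt u v ∨ slt v u)

/-- A facet of `Δ(n)`: an inclusion-maximal face. -/
def IsFacet (n : ℕ) (F : Finset V) : Prop :=
  IsFace n F ∧ ∀ G : Finset V, IsFace n G → F ⊆ G → F = G

/-- The σ-word of a list of vertices: concatenate the coordinates in order. -/
def sigmaWord (L : List V) : List ℕ :=
  L.foldr (fun v acc => v.1 :: v.2.1 :: v.2.2 :: acc) []

/-- The `ℓ`-th vertex of the (increasingly sorted) list `L` satisfies the B-condition:
either it is the first vertex and has some coordinate `> 1`, or some of its coordinates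
exceeds the corresponding coordinate of the previous vertex by more than `1`. -/
def BCond (L : List V) (ℓ : ℕ) (h : ℓ < L.length) : Prop :=
  (ℓ = 0 ∧ (1 < (L.get ⟨ℓ, h⟩).1 ∨ 1 < (L.get ⟨ℓ, h⟩).2.1 ∨ 1 < (L.get ⟨ℓ, h⟩).2.2)) ∨
  (0 < ℓ ∧
    (1 < (L.get ⟨ℓ, h⟩).1 - (L.get ⟨ℓ - 1, by omega⟩).1 ∨
     1 < (L.get ⟨ℓ, h⟩).2.1 - (L.get ⟨ℓ - 1, by omega⟩).2.1 ∨
     1 < (L.get ⟨ℓ, h⟩).2.2 - (L.get ⟨ℓ - 1, by omega⟩).2.2))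

/-! ### Auxiliary definitions and lemmas -/

/-- The weak componentwise order on triples. -/
def sle (u v : V) : Prop := u.1 ≤ v.1 ∧ u.2.1 ≤ v.2.1 ∧ u.2.2 ≤ v.2.2

lemma slt_trans' {a b c : V} (h1 : slt a b) (h2 : slt b c) : slt a c := by
  obtain ⟨x1,x2,x3⟩ := h1; obtain ⟨y1,y2,y3⟩ := h2
  exact ⟨by omega, by omega, by omega⟩

instance : IsTrans V slt := ⟨fun _ _ _ => slt_trans'⟩

lemma slt_ne {a b : V} (h : slt a b) : a ≠ b := by
  intro he; rw [he] at h; exact absurd h.1 (lt_irrefl _)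

lemma sle_refl' (a : V) : sle a a := ⟨le_refl _, le_refl _, le_refl _⟩

lemma sle_of_slt {a b : V} (h : slt a b) : sle a b :=
  ⟨le_of_lt h.1, le_of_lt h.2.1, le_of_lt h.2.2⟩

lemma sle_trans' {a b c : V} (h1 : sle a b) (h2 : sle b c) : sle a c := by
  obtain ⟨x1,x2,x3⟩ := h1; obtain ⟨y1,y2,y3⟩ := h2
  exact ⟨by omega, by omega, by omega⟩

lemma slt_of_sle_slt {a b c : V} (h1 : sle a b) (h2 : slt b c) : slt a c := by
  obtain ⟨x1,x2,x3⟩ := h1; obtain ⟨y1,y2,y3⟩ := h2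
  exact ⟨by omega, by omega, by omega⟩

/-- A facet admits no new vertex comparable to all of its vertices. -/
lemma facet_no_ext {n : ℕ} {G : Finset V} (hG : IsFacet n G) (x : V)
    (hbox : x.1 ∈ Finset.Icc 1 n ∧ x.2.1 ∈ Finset.Icc 1 n ∧ x.2.2 ∈ Finset.Icc 1 n)
    (hcmp : ∀ y ∈ G, slt x y ∨ slt y x) : False := by
  have hxG : x ∉ G := by
    intro h
    rcases hcmp x h with h' | h' <;> exact absurd h'.1 (lt_irrefl _)
  have hface : IsFace n (insert x G) := by
    constructor
    · intro v hv
      rcases Finset.mem_insert.mp hv with rfl | hv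
      · exact hbox
      · exact hG.1.1 v hv
    · intro u hu v hv huv
      rcases Finset.mem_insert.mp hu with hux | hu' <;>
        rcases Finset.mem_insert.mp hv with hvx | hv'
      · exact absurd (hux.trans hvx.symm) huv
      · rw [hux]; exact hcmp v hv'
      · rw [hvx]; exact (hcmp u hu').symm
      · exact hG.1.2 u hu' v hv' huv
  have heq := hG.2 _ hface (Finset.subset_insert _ _)
  exact hxG (heq ▸ Finset.mem_insert_self x G)

lemma no_lex_of_forall₂ : ∀ {a b : List ℕ},
    List.Forall₂ (· ≤ ·) b a → ¬ List.Lex (· < ·) a b := by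
  intro a b h
  induction h with
  | nil => intro hl; cases hl
  | cons hyx _ ih =>
      intro hl
      cases hl with
      | rel h' => omega
      | cons h' => exact ih h'

lemma sigma_forall₂ : ∀ {v w : List V}, List.Forall₂ sle v w →
    List.Forall₂ (· ≤ ·) (sigmaWord v) (sigmaWord w) := by
  intro v w h
  induction h with
  | nil => exact List.Forall₂.nil
  | cons h1 _ ih =>
      exact List.Forall₂.cons h1.1 (List.Forall₂.cons h1.2.1 (List.Forall₂.cons h1.2.2 ih))

/-- Lemma 5.7: if the facet `F` precedes the facet `G` in the order `O`
(larger cardinality first, then lexicographically smaller σ-word first), then some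
vertex of `G \ F` satisfies the B-condition in `G`. -/
theorem exists_BCond_vertex (n : ℕ) (hn : 1 ≤ n) (F G : Finset V)
    (hF : IsFacet n F) (hG : IsFacet n G)
    (LF LG : List V) (hsF : LF.Chain' slt) (hsG : LG.Chain' slt)
    (htF : LF.toFinset = F) (htG : LG.toFinset = G)
    (hO : G.card < F.card ∨
      (F.card = G.card ∧ List.Lex (· < ·) (sigmaWord LF) (sigmaWord LG))) :
    ∃ ℓ : ℕ, ∃ h : ℓ < LG.length, LG.get ⟨ℓ, h⟩ ∈ G \ F ∧ BCond LG ℓ h := by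
  classical
  by_contra hcon
  push_neg at hcon
  have hpF : LF.Pairwise slt := List.isChain_iff_pairwise.mp hsF
  have hpG : LG.Pairwise slt := List.isChain_iff_pairwise.mp hsG
  have hltF : ∀ i j (hi : i < LF.length) (hj : j < LF.length), i < j →
      slt (LF.get ⟨i, hi⟩) (LF.get ⟨j, hj⟩) :=
    fun i j hi hj hij => List.pairwise_iff_get.mp hpF ⟨i, hi⟩ ⟨j, hj⟩ (Fin.mk_lt_mk.mpr hij)
  have hltG : ∀ i j (hi : i < LG.length) (hj : j < LG.length), i < j →
      slt (LG.get ⟨i, hi⟩) (LG.get ⟨j, hj⟩) :=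
    fun i j hi hj hij => List.pairwise_iff_get.mp hpG ⟨i, hi⟩ ⟨j, hj⟩ (Fin.mk_lt_mk.mpr hij)
  have hleG : ∀ i j (hi : i < LG.length) (hj : j < LG.length), i ≤ j →
      sle (LG.get ⟨i, hi⟩) (LG.get ⟨j, hj⟩) := by
    intro i j hi hj hij
    rcases Nat.lt_or_ge i j with h | h
    · exact sle_of_slt (hltG i j hi hj h)
    · have hij' : i = j := by omega
      subst hij'
      exact sle_refl' _
  have hndF : LF.Nodup := hpF.imp slt_ne
  have hndG : LG.Nodup := hpG.imp slt_ne
  have hlF : LF.length = F.card := by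
    rw [← htF, List.toFinset_card_of_nodup hndF]
  have hlG : LG.length = G.card := by
    rw [← htG, List.toFinset_card_of_nodup hndG]
  have hmemG : ∀ i (h : i < LG.length), LG.get ⟨i, h⟩ ∈ G := by
    intro i h
    rw [← htG]
    exact List.mem_toFinset.mpr (LG.get_mem _)
  have hmemF : ∀ i (h : i < LF.length), LF.get ⟨i, h⟩ ∈ F := by
    intro i h
    rw [← htF]
    exact List.mem_toFinset.mpr (LF.get_mem _)
  -- the key componentwise comparison
  have key : ∀ ℓ (hG' : ℓ < LG.length) (hF' : ℓ < LF.length),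
      sle (LG.get ⟨ℓ, hG'⟩) (LF.get ⟨ℓ, hF'⟩) := by
    intro ℓ
    induction ℓ using Nat.strong_induction_on with
    | _ ℓ IH =>
      intro hG' hF'
      by_cases hvF : LG.get ⟨ℓ, hG'⟩ ∈ F
      · -- the vertex lies in F, say it is the m-th vertex of LF
        have hvLF : LG.get ⟨ℓ, hG'⟩ ∈ LF := by
          rw [← htF] at hvF
          exact List.mem_toFinset.mp hvF
        obtain ⟨⟨m, hm⟩, hmv⟩ := List.mem_iff_get.mp hvLF
        have hmle : m ≤ ℓ := by
          by_contra hml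
          push_neg at hml
          have hm1 : m - 1 < LF.length := by omega
          refine facet_no_ext hG (LF.get ⟨m - 1, hm1⟩) (hF.1.1 _ (hmemF _ hm1)) ?_
          intro y hy
          have hyLG : y ∈ LG := by
            rw [← htG] at hy
            exact List.mem_toFinset.mp hy
          obtain ⟨⟨j, hj⟩, hjy⟩ := List.mem_iff_get.mp hyLG
          rcases Nat.lt_or_ge j ℓ with hjl | hjl
          · -- y is below the (ℓ-1)-st vertex of G
            right
            have hl1G : ℓ - 1 < LG.length := by omega
            have hl1F : ℓ - 1 < LF.length := by omega
            have h1 : sle (LG.get ⟨j, hj⟩) (LG.get ⟨ℓ - 1, hl1G⟩) :=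
              hleG j (ℓ - 1) hj hl1G (by omega)
            have h2 : sle (LG.get ⟨ℓ - 1, hl1G⟩) (LF.get ⟨ℓ - 1, hl1F⟩) :=
              IH (ℓ - 1) (by omega) hl1G hl1F
            have h3 : slt (LF.get ⟨ℓ - 1, hl1F⟩) (LF.get ⟨m - 1, hm1⟩) :=
              hltF (ℓ - 1) (m - 1) hl1F hm1 (by omega)
            rw [← hjy]
            exact slt_of_sle_slt (sle_trans' h1 h2) h3
          · -- y is above the ℓ-th vertex of G
            left
            have h3 : slt (LF.get ⟨m - 1, hm1⟩) (LF.get ⟨m, hm⟩) :=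
              hltF (m - 1) m hm1 hm (by omega)
            have h4 : sle (LG.get ⟨ℓ, hG'⟩) (LG.get ⟨j, hj⟩) :=
              hleG ℓ j hG' hj hjl
            rw [← hjy]
            have h5 : slt (LF.get ⟨m - 1, hm1⟩) (LG.get ⟨ℓ, hG'⟩) := by
              rw [← hmv]; exact h3
            obtain ⟨a1, a2, a3⟩ := h5
            obtain ⟨b1, b2, b3⟩ := h4
            exact ⟨by omega, by omega, by omega⟩
        -- now m ≤ ℓ, so v_ℓ = w_m ≤ w_ℓ
        rcases Nat.lt_or_ge m ℓ with hml | hml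
        · have := hltF m ℓ hm hF' hml
          rw [hmv] at this
          exact sle_of_slt this
        · have hml' : m = ℓ := by omega
          subst hml'
          rw [hmv.symm]
          exact sle_refl' _
      · -- the vertex is in G \ F, hence tight
        have hmemGl : LG.get ⟨ℓ, hG'⟩ ∈ G \ F :=
          Finset.mem_sdiff.mpr ⟨hmemG ℓ hG', hvF⟩
        have hnb := hcon ℓ hG' hmemGl
        rw [BCond] at hnb
        push_neg at hnb
        obtain ⟨hnb1, hnb2⟩ := hnb
        rcases Nat.eq_zero_or_pos ℓ with rfl | hl0
        · -- first vertex of G equals (1,1,1)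
          have hb := hG.1.1 _ (hmemG 0 hG')
          have hbF := hF.1.1 _ (hmemF 0 hF')
          rw [Finset.mem_Icc, Finset.mem_Icc, Finset.mem_Icc] at hb hbF
          have h1 := hnb1 rfl
          exact ⟨by omega, by omega, by omega⟩
        · have hprev : ℓ - 1 < LG.length := by omega
          have hprevF : ℓ - 1 < LF.length := by omega
          have hgap : (LG.get ⟨ℓ, hG'⟩).1 - (LG.get ⟨ℓ - 1, hprev⟩).1 ≤ 1 ∧
              (LG.get ⟨ℓ, hG'⟩).2.1 - (LG.get ⟨ℓ - 1, hprev⟩).2.1 ≤ 1 ∧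
              (LG.get ⟨ℓ, hG'⟩).2.2 - (LG.get ⟨ℓ - 1, hprev⟩).2.2 ≤ 1 := hnb2 hl0
          have hstep : slt (LG.get ⟨ℓ - 1, hprev⟩) (LG.get ⟨ℓ, hG'⟩) :=
            hltG (ℓ - 1) ℓ hprev hG' (by omega)
          have hIH : sle (LG.get ⟨ℓ - 1, hprev⟩) (LF.get ⟨ℓ - 1, hprevF⟩) :=
            IH (ℓ - 1) (by omega) hprev hprevF
          have hstepF : slt (LF.get ⟨ℓ - 1, hprevF⟩) (LF.get ⟨ℓ, hF'⟩) :=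
            hltF (ℓ - 1) ℓ hprevF hF' (by omega)
          obtain ⟨a1, a2, a3⟩ := hgap
          obtain ⟨b1, b2, b3⟩ := hstep
          obtain ⟨c1, c2, c3⟩ := hIH
          obtain ⟨d1, d2, d3⟩ := hstepF
          exact ⟨by omega, by omega, by omega⟩
  -- G has at least as many vertices as F
  have hsr : LF.length ≤ LG.length := by
    by_contra hcontra
    push_neg at hcontra
    rcases Nat.eq_zero_or_pos LG.length with hr0 | hr0
    · refine facet_no_ext hG ((1 : ℕ), (1 : ℕ), (1 : ℕ))
        ⟨Finset.mem_Icc.mpr ⟨le_refl _, hn⟩, Finset.mem_Icc.mpr ⟨le_refl _, hn⟩,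
          Finset.mem_Icc.mpr ⟨le_refl _, hn⟩⟩ ?_
      intro y hy
      have hLG : LG = [] := List.length_eq_zero_iff.mp hr0
      rw [← htG, hLG] at hy
      simp at hy
    · have hs1 : LF.length - 1 < LF.length := by omega
      refine facet_no_ext hG (LF.get ⟨LF.length - 1, hs1⟩) (hF.1.1 _ (hmemF _ hs1)) ?_
      intro y hy
      have hyLG : y ∈ LG := by
        rw [← htG] at hy
        exact List.mem_toFinset.mp hy
      obtain ⟨⟨j, hj⟩, hjy⟩ := List.mem_iff_get.mp hyLG
      right
      have hr1 : LG.length - 1 < LG.length := by omega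
      have hr1F : LG.length - 1 < LF.length := by omega
      have h1 : sle (LG.get ⟨j, hj⟩) (LG.get ⟨LG.length - 1, hr1⟩) :=
        hleG j (LG.length - 1) hj hr1 (by omega)
      have h2 : sle (LG.get ⟨LG.length - 1, hr1⟩) (LF.get ⟨LG.length - 1, hr1F⟩) :=
        key _ hr1 hr1F
      have h3 : slt (LF.get ⟨LG.length - 1, hr1F⟩) (LF.get ⟨LF.length - 1, hs1⟩) :=
        hltF _ _ hr1F hs1 (by omega)
      rw [← hjy]
      exact slt_of_sle_slt (sle_trans' h1 h2) h3
  rcases hO with hlt | ⟨hcard, hlex⟩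
  · omega
  · have hrs : LG.length = LF.length := by omega
    have hf2 : List.Forall₂ sle LG LF :=
      List.forall₂_iff_get.mpr ⟨hrs, fun i h1 h2 => key i h1 h2⟩
    exact no_lex_of_forall₂ (sigma_forall₂ hf2) hlex
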